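/- Dimension of the span of a gallery class (Proposition 3.17): Let F be a one-dimensional tropical fan in ℝ^n with primitive generators v_1, …, v_q spanning ℝ^n and weights ω_1, …, ω_q. Fix an index m and distinct indices i_1, …, i_k ∈ {1,…,q} \ {m} (k ≥ 1), and for each t let l_t ∈ (ℤ^n)^∨ be a gallery of F on (i_t, m), i.e. l_t(v_{i_t}) = 1, l_t(v_m) = −1, l_t(v_j) = 0 for j ∉ {i_t, m}, and ω_m = ω_{i_t} = 1. Assume F is irreducible in the following sense: there is no nonempty proper subset S ⊊ {1,…,q} with Σ_{j ∈ S} ω_j v_j = 0. Assume also {m, i_1, …, i_k} ≠ {1,…,q}. Then the real span of {v_m, v_{i_1}, …, v_{i_k}} has dimension k + 1. -/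
import Mathlib


/-- Integer pairing of a functional `l ∈ (ℤⁿ)^∨` with a vector `x ∈ ℤⁿ`. -/
def dotZ {n : ℕ} (l x : Fin n → ℤ) : ℤ := ∑ j, l j * x j

/-- Value of the nonnegative tropical regular function `max(0, l₁, …, l_k)` at `x ∈ ℤⁿ`. -/
def tropEvalZ {n k : ℕ} (l : Fin k → Fin n → ℤ) (x : Fin n → ℤ) : ℤ :=
  Finset.univ.fold max 0 (fun s => dotZ (l s) x)

/-- A one-dimensional tropical fan in ℝⁿ: pairwise distinct primitive integer vectors
`v i` (the primitive generators of the rays) spanning ℝⁿ, with positive integer weights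
`w i`, subject to the balancing condition `∑ i, w i • v i = 0`. -/
structure TropFan1 (n q : ℕ) where
  v : Fin q → Fin n → ℤ
  w : Fin q → ℤ
  v_inj : Function.Injective v
  v_prim : ∀ i, Finset.univ.gcd (v i) = 1
  w_pos : ∀ i, 0 < w i
  balanced : ∑ i, w i • v i = 0
  spans : Submodule.span ℝ (Set.range fun i => fun j => ((v i j : ℝ))) = ⊤

/-- A gallery of `F` on the pair of distinct indices `(a, b)`. -/
def IsGallery {n q : ℕ} (F : TropFan1 n q) (a b : Fin q) (l : Fin n → ℤ) : Prop :=
  a ≠ b ∧ F.w a = 1 ∧ F.w b = 1 ∧ dotZ l (F.v a) = 1 ∧ dotZ l (F.v b) = -1 ∧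
    ∀ j, j ≠ a → j ≠ b → dotZ l (F.v j) = 0


/-- Dimension of the span of a gallery class (Proposition 3.17): if `F` is irreducible,
each `l_t` is a gallery of `F` on `(i_t, m)`, and the rays `m, i_1, …, i_k` do not
exhaust the rays of `F`, then the real span of `{v_m, v_{i_1}, …, v_{i_k}}` has
dimension `k + 1`. -/
theorem gallery_class_span_dim {n q k : ℕ} (hk : 1 ≤ k) (F : TropFan1 n q)
    (m : Fin q) (i : Fin k → Fin q) (hi : Function.Injective i) (him : ∀ t, i t ≠ m)
    (l : Fin k → Fin n → ℤ) (hgal : ∀ t, IsGallery F (i t) m (l t))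
    (hirr : ¬ ∃ S : Finset (Fin q), S.Nonempty ∧ S ≠ Finset.univ ∧
      ∑ j ∈ S, F.w j • F.v j = 0)
    (hne : insert m (Finset.image i Finset.univ) ≠ Finset.univ) :
    Module.finrank ℝ ↥(Submodule.span ℝ
      (insert (fun j => ((F.v m j : ℝ)))
        (Set.range fun t => fun j => ((F.v (i t) j : ℝ))))) = k + 1 := by
  classical
  set vm' : Fin n → ℝ := fun j => ((F.v m j : ℝ)) with hvm'
  set vi' : Fin k → Fin n → ℝ := fun t => fun j => ((F.v (i t) j : ℝ)) with hvi'
  set f : Fin (k+1) → Fin n → ℝ := Fin.cons vm' vi' with hf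
  have hrange : (insert vm' (Set.range vi') : Set (Fin n → ℝ)) = Set.range f := by
    rw [hf, Fin.range_cons]
  -- key nonvanishing from irreducibility
  have hZ : F.v m + ∑ t, F.v (i t) ≠ 0 := by
    intro h0
    apply hirr
    refine ⟨insert m (Finset.image i Finset.univ), ⟨m, Finset.mem_insert_self _ _⟩, hne, ?_⟩
    have hm : m ∉ Finset.image i Finset.univ := by
      simp only [Finset.mem_image, Finset.mem_univ, true_and]
      rintro ⟨t, ht⟩; exact him t ht
    rw [Finset.sum_insert hm, Finset.sum_image (fun a _ b _ h => hi h)]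
    have hwm : F.w m = 1 := (hgal ⟨0, hk⟩).2.2.1
    have hwt : ∀ t, F.w (i t) = 1 := fun t => (hgal t).2.1
    simp only [hwm, one_smul]
    calc F.v m + ∑ t, F.w (i t) • F.v (i t) = F.v m + ∑ t, F.v (i t) := by
          congr 1; exact Finset.sum_congr rfl fun t _ => by rw [hwt t, one_smul]
      _ = 0 := h0
  have hT : vm' + ∑ t, vi' t ≠ 0 := by
    intro h0
    apply hZ
    funext j
    have := congrFun h0 j
    simp only [Pi.add_apply, Finset.sum_apply, Pi.zero_apply, hvm', hvi'] at this
    have h2 : ((F.v m j + ∑ t, F.v (i t) j : ℤ) : ℝ) = 0 := by push_cast; exact this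
    simp only [Pi.add_apply, Finset.sum_apply, Pi.zero_apply]
    exact_mod_cast h2
  -- pairing
  set D : (Fin n → ℤ) → (Fin n → ℝ) → ℝ := fun a x => ∑ j, (a j : ℝ) * x j with hDdef
  have hDv : ∀ a (b : Fin q), D a (fun j => ((F.v b j : ℝ))) = (dotZ a (F.v b) : ℝ) := by
    intro a b; simp [hDdef, dotZ]
  have hli : LinearIndependent ℝ f := by
    rw [Fintype.linearIndependent_iff]
    intro g hg
    have hD : ∀ a : Fin n → ℤ, ∑ s, g s * D a (f s) = 0 := by
      intro a
      have : D a (∑ s, g s • f s) = ∑ s, g s * D a (f s) := by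
        simp only [hDdef, Finset.sum_apply, Pi.smul_apply, smul_eq_mul, Finset.mul_sum]
        rw [Finset.sum_comm]
        exact Finset.sum_congr rfl fun s _ => Finset.sum_congr rfl fun j _ => by ring
      rw [← this, hg]
      simp [hDdef]
    have geq : ∀ t : Fin k, g t.succ = g 0 := by
      intro t
      have h1 := hD (l t)
      rw [Fin.sum_univ_succ] at h1
      have h2 : ∀ s : Fin k, D (l t) (f s.succ) = if s = t then 1 else 0 := by
        intro s
        rw [hf, Fin.cons_succ, hvi', hDv]
        by_cases hst : s = t
        · subst hst; rw [(hgal s).2.2.2.1]; simp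
        · rw [(hgal t).2.2.2.2.2 (i s) (fun h => hst (hi h)) (him s)]; simp [hst]
      have h3 : D (l t) (f 0) = -1 := by
        rw [hf, Fin.cons_zero, hvm', hDv, (hgal t).2.2.2.2.1]; norm_num
      rw [h3] at h1
      simp only [h2, mul_ite, mul_one, mul_zero] at h1
      rw [Finset.sum_ite_eq' Finset.univ t (fun s => g s.succ)] at h1
      simp at h1
      linarith
    have hg0 : g 0 • (vm' + ∑ t, vi' t) = 0 := by
      rw [← hg, Fin.sum_univ_succ]
      simp only [hf, Fin.cons_zero, Fin.cons_succ, geq]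
      rw [smul_add, Finset.smul_sum]
    have h0 : g 0 = 0 := by
      rcases smul_eq_zero.mp hg0 with h | h
      · exact h
      · exact absurd h hT
    intro s
    refine Fin.cases ?_ ?_ s
    · exact h0
    · intro t; rw [geq t, h0]
  rw [hrange]
  have := finrank_span_eq_card hli
  simpa using this
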